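/- Let A, M ∈ ℂ^{n×n} be linearly independent over ℝ, and let α := arccos( Re⟨A,M⟩_F / (‖A‖_F·‖M‖_F) ) ∈ (0,π) be the angle between them. Define t : [0,1] → [0,1] by t(0) := 0 and, for τ ∈ (0,1], t(τ) := ‖M‖_F / ( ‖M‖_F + ‖A‖_F·( sin α · cot(τα) − cos α ) ). Then t is a bijection of [0,1] onto [0,1], and for every τ ∈ [0,1] the matrix Q_τ := t(τ)·A + (1−t(τ))·M is nonzero and satisfies arccos( Re⟨M,Q_τ⟩_F / (‖M‖_F·‖Q_τ‖_F) ) = τα, i.e., the angle between M and Q_τ equals τα. -/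

import Mathlib

noncomputable section

open Matrix Set

/-- `T_v`: the orthogonal complement of `v` in `ℂ^n`. -/
def Tv {n : ℕ} (v : EuclideanSpace ℂ (Fin n)) : Submodule ℂ (EuclideanSpace ℂ (Fin n)) :=
  (ℂ ∙ v)ᗮ

/-- The linear map `A_{λ,v} : T_v → T_v`, `x ↦ P_{v⊥}((A - λ·Id) x)`. -/
def Alv {n : ℕ} (A : Matrix (Fin n) (Fin n) ℂ) (lam : ℂ) (v : EuclideanSpace ℂ (Fin n)) :
    Tv v →ₗ[ℂ] Tv v :=
  (Submodule.orthogonalProjection (Tv v)).toLinearMap ∘ₗ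
    (Matrix.toEuclideanLin A - lam • LinearMap.id) ∘ₗ (Tv v).subtype

/-- `A_{λ,v}` as a continuous linear map. -/
def AlvC {n : ℕ} (A : Matrix (Fin n) (Fin n) ℂ) (lam : ℂ) (v : EuclideanSpace ℂ (Fin n)) :
    Tv v →L[ℂ] Tv v :=
  LinearMap.toContinuousLinearMap (Alv A lam v)

/-- Frobenius norm of a complex matrix. -/
def frobNorm {n : ℕ} (A : Matrix (Fin n) (Fin n) ℂ) : ℝ :=
  Real.sqrt (∑ i, ∑ j, ‖A i j‖ ^ 2)

/-- The condition number `μ(A,λ,v) = ‖A‖_F ‖A_{λ,v}^{-1}‖`. -/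
def mu {n : ℕ} (A : Matrix (Fin n) (Fin n) ℂ) (lam : ℂ) (v : EuclideanSpace ℂ (Fin n)) : ℝ :=
  frobNorm A * ‖(AlvC A lam v).inverse‖

/-- Fubini-Study (angular) distance. -/
def dP {n : ℕ} (v w : EuclideanSpace ℂ (Fin n)) : ℝ :=
  Real.arccos (‖(inner ℂ v w : ℂ)‖ / (‖v‖ * ‖w‖))

/-- The distance on triples. -/
def distT {n : ℕ} (A : Matrix (Fin n) (Fin n) ℂ) (lam : ℂ) (v : EuclideanSpace ℂ (Fin n))
    (A' : Matrix (Fin n) (Fin n) ℂ) (lam' : ℂ) (v' : EuclideanSpace ℂ (Fin n)) : ℝ :=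
  Real.sqrt ((frobNorm ((frobNorm A)⁻¹ • A - (frobNorm A')⁻¹ • A')) ^ 2 +
    ‖lam / (frobNorm A : ℂ) - lam' / (frobNorm A' : ℂ)‖ ^ 2 + dP v v' ^ 2)

/-- The Frobenius Hermitian inner product `⟨A,B⟩_F = trace(B* A) = Σ a_ij conj(b_ij)`. -/
def frobInner {n : ℕ} (A B : Matrix (Fin n) (Fin n) ℂ) : ℂ :=
  ∑ i, ∑ j, A i j * (starRingEnd ℂ) (B i j)

namespace SegAngleAux

variable {n : ℕ}

lemma frobInner_self_re (X : Matrix (Fin n) (Fin n) ℂ) :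
    (frobInner X X).re = ∑ i, ∑ j, ‖X i j‖^2 := by
  simp [frobInner, Complex.re_sum, Complex.mul_conj, ← Complex.sq_norm,
    ← Complex.ofReal_pow]

lemma frobNorm_eq_sqrt (X : Matrix (Fin n) (Fin n) ℂ) :
    frobNorm X = Real.sqrt ((frobInner X X).re) := by
  rw [frobInner_self_re, frobNorm]

lemma frobInner_self_re_nonneg (X : Matrix (Fin n) (Fin n) ℂ) : 0 ≤ (frobInner X X).re := by
  rw [frobInner_self_re]; positivity

lemma sq_frobNorm (X : Matrix (Fin n) (Fin n) ℂ) : frobNorm X ^ 2 = (frobInner X X).re := by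
  rw [frobNorm_eq_sqrt, Real.sq_sqrt (frobInner_self_re_nonneg X)]

lemma frobInner_self_re_pos {X : Matrix (Fin n) (Fin n) ℂ} (hX : X ≠ 0) :
    0 < (frobInner X X).re := by
  rw [frobInner_self_re]
  have : ¬ ∀ i j, X i j = 0 := by
    intro h; exact hX (by ext i j; simp [h])
  push_neg at this
  obtain ⟨i, j, hij⟩ := this
  have h1 : 0 < ‖X i j‖^2 := pow_pos (norm_pos_iff.mpr hij) 2
  refine Finset.sum_pos' (fun i' _ => Finset.sum_nonneg fun j' _ => by positivity)
    ⟨i, Finset.mem_univ i, Finset.sum_pos' (fun j' _ => by positivity)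
      ⟨j, Finset.mem_univ j, h1⟩⟩

lemma frobNorm_pos {X : Matrix (Fin n) (Fin n) ℂ} (hX : X ≠ 0) : 0 < frobNorm X := by
  rw [frobNorm_eq_sqrt]; exact Real.sqrt_pos.mpr (frobInner_self_re_pos hX)

lemma frobInner_comm (A B : Matrix (Fin n) (Fin n) ℂ) :
    frobInner B A = (starRingEnd ℂ) (frobInner A B) := by
  simp [frobInner, map_sum, mul_comm]

lemma frobInner_smul_add_self (x y : ℝ) (A M : Matrix (Fin n) (Fin n) ℂ) :
    frobInner (x•A+y•M) (x•A+y•M)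
      = (x:ℂ)^2 * frobInner A A + (x:ℂ)*(y:ℂ)*(frobInner A M + frobInner M A)
        + (y:ℂ)^2 * frobInner M M := by
  simp only [frobInner, Matrix.add_apply, Matrix.smul_apply, Complex.real_smul, map_add, _root_.map_mul,
    Complex.conj_ofReal, Finset.mul_sum, ← Finset.sum_add_distrib]
  refine Finset.sum_congr rfl fun i _ => Finset.sum_congr rfl fun j _ => ?_
  ring

lemma frobInner_left_smul_add (x y : ℝ) (A M : Matrix (Fin n) (Fin n) ℂ) :
    frobInner M (x•A+y•M) = (x:ℂ) * frobInner M A + (y:ℂ) * frobInner M M := by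
  simp only [frobInner, Matrix.add_apply, Matrix.smul_apply, Complex.real_smul, map_add, _root_.map_mul,
    Complex.conj_ofReal, Finset.mul_sum, ← Finset.sum_add_distrib]
  refine Finset.sum_congr rfl fun i _ => Finset.sum_congr rfl fun j _ => ?_
  ring

lemma re_smul_add_self (x y : ℝ) (A M : Matrix (Fin n) (Fin n) ℂ) :
    (frobInner (x•A+y•M) (x•A+y•M)).re
      = x^2*(frobInner A A).re + 2*x*y*(frobInner A M).re + y^2*(frobInner M M).re := by
  rw [frobInner_smul_add_self, frobInner_comm A M]
  simp only [← Complex.ofReal_pow, ← Complex.ofReal_mul, Complex.add_re, Complex.re_ofReal_mul,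
    Complex.conj_re]
  ring

lemma re_left_smul_add (x y : ℝ) (A M : Matrix (Fin n) (Fin n) ℂ) :
    (frobInner M (x•A+y•M)).re = x*(frobInner A M).re + y*(frobInner M M).re := by
  rw [frobInner_left_smul_add, frobInner_comm A M]
  simp only [Complex.add_re, Complex.re_ofReal_mul, Complex.conj_re]

lemma frobNorm_zero : frobNorm (0 : Matrix (Fin n) (Fin n) ℂ) = 0 := by
  simp [frobNorm]

/-! Real-variable helper lemmas -/

lemma sin_cross (α x y : ℝ) :
    Real.sin (x*α) * Real.sin ((1-y)*α) - Real.sin (y*α) * Real.sin ((1-x)*α)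
      = Real.sin α * Real.sin ((x-y)*α) := by
  rw [show (1-y)*α = α - y*α by ring, show (1-x)*α = α - x*α by ring,
    show (x-y)*α = x*α - y*α by ring, Real.sin_sub, Real.sin_sub, Real.sin_sub]
  ring

lemma key_norm (a m S C s cb d : ℝ) (hd0 : d ≠ 0) (h1 : s^2+cb^2=1) (h2 : S^2+C^2=1) :
    (m*s/d)^2*a^2 + 2*(m*s/d)*(a*(S*cb - C*s)/d)*(a*m*C) + (a*(S*cb - C*s)/d)^2*m^2
      = (a*m*S/d)^2 := by
  field_simp
  linear_combination (m^2*a^2*S^2)*h1 - (m^2*a^2*s^2)*h2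

lemma key_inner (a m S C s cb d : ℝ) (hd0 : d ≠ 0) :
    (m*s/d)*(a*m*C) + (a*(S*cb - C*s)/d)*m^2 = a*m^2*(S*cb)/d := by
  field_simp
  ring

lemma key_ratio (a m S cb d : ℝ) (hd0 : d ≠ 0) (ha : a ≠ 0) (hm : m ≠ 0) (hS : S ≠ 0) :
    a*m^2*(S*cb)/d / (m * (a*m*S/d)) = cb := by
  field_simp

/-- The reparameterizing function written with positive denominator. -/
def gfun (m a α τ : ℝ) : ℝ :=
  m * Real.sin (τ*α) / (m * Real.sin (τ*α) + a * Real.sin ((1-τ)*α))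

variable {m a α : ℝ}

lemma sin_mul_nonneg (hα0 : 0 < α) (hαπ : α < Real.pi) {τ : ℝ} (h0 : 0 ≤ τ) (h1 : τ ≤ 1) :
    0 ≤ Real.sin (τ*α) :=
  Real.sin_nonneg_of_nonneg_of_le_pi (by positivity)
    (le_trans (by nlinarith) hαπ.le)

lemma sin_mul_pos (hα0 : 0 < α) (hαπ : α < Real.pi) {τ : ℝ} (h0 : 0 < τ) (h1 : τ ≤ 1) :
    0 < Real.sin (τ*α) :=
  Real.sin_pos_of_pos_of_lt_pi (by positivity) (lt_of_le_of_lt (by nlinarith) hαπ)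

lemma gden_pos (ha : 0 < a) (hm : 0 < m) (hα0 : 0 < α) (hαπ : α < Real.pi) :
    ∀ τ ∈ Set.Icc (0:ℝ) 1, 0 < m * Real.sin (τ*α) + a * Real.sin ((1-τ)*α) := by
  rintro τ ⟨h0, h1⟩
  have h2 : 0 ≤ Real.sin ((1-τ)*α) := sin_mul_nonneg hα0 hαπ (by linarith) (by linarith)
  rcases eq_or_lt_of_le h0 with h | h
  · have hS : 0 < Real.sin α := Real.sin_pos_of_pos_of_lt_pi hα0 hαπ
    rw [← h]
    norm_num
    exact mul_pos ha hS
  · nlinarith [mul_pos hm (sin_mul_pos hα0 hαπ h h1)]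

lemma gfun_strictMono (ha : 0 < a) (hm : 0 < m) (hα0 : 0 < α) (hαπ : α < Real.pi) :
    StrictMonoOn (gfun m a α) (Set.Icc 0 1) := by
  intro τ₁ h₁ τ₂ h₂ hlt
  have hS : 0 < Real.sin α := Real.sin_pos_of_pos_of_lt_pi hα0 hαπ
  have hd₁ := gden_pos ha hm hα0 hαπ τ₁ h₁
  have hd₂ := gden_pos ha hm hα0 hαπ τ₂ h₂
  unfold gfun
  rw [div_lt_div_iff₀ hd₁ hd₂]
  have hid := sin_cross α τ₁ τ₂
  have hneg : Real.sin ((τ₁-τ₂)*α) = - Real.sin ((τ₂-τ₁)*α) := by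
    rw [show (τ₁-τ₂)*α = -((τ₂-τ₁)*α) by ring, Real.sin_neg]
  rw [hneg] at hid
  have hpos2 : 0 < Real.sin ((τ₂-τ₁)*α) :=
    Real.sin_pos_of_pos_of_lt_pi (by nlinarith [h₁.1, h₂.2])
      (lt_of_le_of_lt (by nlinarith [h₁.1, h₂.2]) hαπ)
  have key : m * Real.sin (τ₂*α) * (m * Real.sin (τ₁*α) + a * Real.sin ((1-τ₁)*α))
      - m * Real.sin (τ₁*α) * (m * Real.sin (τ₂*α) + a * Real.sin ((1-τ₂)*α))
      = m*a*(Real.sin α * Real.sin ((τ₂-τ₁)*α)) := by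
    linear_combination (-(m*a))*hid
  nlinarith [mul_pos (mul_pos hm ha) (mul_pos hS hpos2)]

lemma gfun_mapsTo (ha : 0 < a) (hm : 0 < m) (hα0 : 0 < α) (hαπ : α < Real.pi) :
    Set.MapsTo (gfun m a α) (Set.Icc 0 1) (Set.Icc 0 1) := by
  intro τ hτ
  have hdτ := gden_pos ha hm hα0 hαπ τ hτ
  have hs := sin_mul_nonneg hα0 hαπ hτ.1 hτ.2
  have hs' : 0 ≤ Real.sin ((1-τ)*α) :=
    sin_mul_nonneg hα0 hαπ (by linarith [hτ.2]) (by linarith [hτ.1])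
  constructor
  · exact div_nonneg (by positivity) hdτ.le
  · rw [gfun, div_le_one hdτ]
    nlinarith [mul_nonneg ha.le hs']

lemma gfun_zero : gfun m a α 0 = 0 := by simp [gfun]

lemma gfun_one (hm : 0 < m) (hα0 : 0 < α) (hαπ : α < Real.pi) : gfun m a α 1 = 1 := by
  have hS : 0 < Real.sin α := Real.sin_pos_of_pos_of_lt_pi hα0 hαπ
  rw [gfun]
  simp only [one_mul, sub_self, zero_mul, Real.sin_zero, mul_zero, add_zero]
  exact div_self (by positivity)

lemma gfun_bijOn (ha : 0 < a) (hm : 0 < m) (hα0 : 0 < α) (hαπ : α < Real.pi) :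
    Set.BijOn (gfun m a α) (Set.Icc 0 1) (Set.Icc 0 1) := by
  refine ⟨gfun_mapsTo ha hm hα0 hαπ, (gfun_strictMono ha hm hα0 hαπ).injOn, ?_⟩
  have hcont : ContinuousOn (gfun m a α) (Set.Icc 0 1) := by
    apply ContinuousOn.div
    · fun_prop
    · fun_prop
    · exact fun τ hτ => (gden_pos ha hm hα0 hαπ τ hτ).ne'
  have := intermediate_value_Icc (zero_le_one) hcont
  rw [gfun_zero, gfun_one hm hα0 hαπ] at this
  exact this

lemma gfun_eq_t (ha : 0 < a) (hm : 0 < m) (hα0 : 0 < α) (hαπ : α < Real.pi) :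
    ∀ τ ∈ Set.Icc (0:ℝ) 1,
      (if τ = 0 then 0 else
        m / (m + a * (Real.sin α * (Real.cos (τ*α) / Real.sin (τ*α)) - Real.cos α)))
      = gfun m a α τ := by
  rintro τ ⟨h0, h1⟩
  rcases eq_or_lt_of_le h0 with h | h
  · rw [← h, if_pos rfl, gfun, zero_mul, Real.sin_zero, mul_zero, zero_div]
  · have hs := sin_mul_pos hα0 hαπ h h1
    have hdpos := gden_pos ha hm hα0 hαπ τ ⟨h0, h1⟩
    rw [if_neg (ne_of_gt h), gfun]
    rw [show m + a * (Real.sin α * (Real.cos (τ*α) / Real.sin (τ*α)) - Real.cos α)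
        = (m * Real.sin (τ*α) + a * Real.sin ((1-τ)*α)) / Real.sin (τ*α) by
      rw [show (1-τ)*α = α - τ*α by ring, Real.sin_sub, eq_div_iff hs.ne']
      field_simp]
    rw [div_div_eq_mul_div, mul_comm m (Real.sin (τ*α)), mul_comm (Real.sin (τ*α)) m]

end SegAngleAux

/- Proposition: reparameterization of the segment `[M,A]` by the angle. -/
open SegAngleAux in
set_option maxHeartbeats 1000000 in
/-- Proposition: reparameterization of the segment `[M,A]` by the angle. -/
theorem segment_angle_parameterization {n : ℕ} (A M : Matrix (Fin n) (Fin n) ℂ)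
    (hind : LinearIndependent ℝ ![A, M]) :
    0 < Real.arccos ((frobInner A M).re / (frobNorm A * frobNorm M)) ∧
    Real.arccos ((frobInner A M).re / (frobNorm A * frobNorm M)) < Real.pi ∧
    (let α : ℝ := Real.arccos ((frobInner A M).re / (frobNorm A * frobNorm M));
     let t : ℝ → ℝ := fun τ =>
       if τ = 0 then 0 else
         frobNorm M /
           (frobNorm M + frobNorm A *
             (Real.sin α * (Real.cos (τ * α) / Real.sin (τ * α)) - Real.cos α));
     Set.BijOn t (Set.Icc 0 1) (Set.Icc 0 1) ∧
       ∀ τ ∈ Set.Icc (0 : ℝ) 1,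
         t τ • A + (1 - t τ) • M ≠ 0 ∧
         Real.arccos ((frobInner M (t τ • A + (1 - t τ) • M)).re /
             (frobNorm M * frobNorm (t τ • A + (1 - t τ) • M))) = τ * α) := by
  have hpair := LinearIndependent.pair_iff.mp hind
  have hA : A ≠ 0 := by
    intro h; simpa [h] using (hpair 1 0 (by simp [h])).1
  have hM : M ≠ 0 := by
    intro h; simpa [h] using (hpair 0 1 (by simp [h])).2
  set a := frobNorm A with ha_def
  set m := frobNorm M with hm_def
  set c := (frobInner A M).re with hc_def
  have ha : 0 < a := frobNorm_pos hA
  have hm : 0 < m := frobNorm_pos hM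
  have haa : a^2 = (frobInner A A).re := sq_frobNorm A
  have hmm : m^2 = (frobInner M M).re := sq_frobNorm M
  have hquad : ∀ x y : ℝ, ¬(x = 0 ∧ y = 0) → 0 < x^2*a^2 + 2*x*y*c + y^2*m^2 := by
    intro x y hxy
    have hne : x•A + y•M ≠ 0 := fun h => hxy (hpair x y h)
    have hpos := frobInner_self_re_pos hne
    rw [re_smul_add_self, ← haa, ← hmm, ← hc_def] at hpos
    exact hpos
  have hc2 : c^2 < a^2*m^2 := by
    have := hquad (-c) (a^2) (by rintro ⟨-, h⟩; nlinarith)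
    nlinarith
  have hr1 : (-1:ℝ) < c/(a*m) := by
    rw [lt_div_iff₀ (by positivity)]
    nlinarith [sq_nonneg (c + a*m), mul_pos ha hm]
  have hr2 : c/(a*m) < 1 := by
    rw [div_lt_one (by positivity)]
    nlinarith [sq_nonneg (c - a*m), mul_pos ha hm]
  set α := Real.arccos (c/(a*m)) with hα_def
  have hα0 : 0 < α := Real.arccos_pos.mpr hr2
  have hαπ : α < Real.pi := lt_of_le_of_ne (Real.arccos_le_pi _)
    (by rw [Ne, hα_def, Real.arccos_eq_pi]; push_neg; linarith)
  have hcos : Real.cos α = c/(a*m) := Real.cos_arccos hr1.le hr2.le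
  have hc : c = a*m*Real.cos α := by rw [hcos]; field_simp
  have hS : 0 < Real.sin α := Real.sin_pos_of_pos_of_lt_pi hα0 hαπ
  have hSC : Real.sin α^2 + Real.cos α^2 = 1 := Real.sin_sq_add_cos_sq α
  have hsub : ∀ τ : ℝ, Real.sin ((1-τ)*α)
      = Real.sin α * Real.cos (τ*α) - Real.cos α * Real.sin (τ*α) := by
    intro τ
    rw [show (1-τ)*α = α - τ*α by ring, Real.sin_sub]
  have hteq := gfun_eq_t (m := m) (a := a) ha hm hα0 hαπ
  have hbij : Set.BijOn (fun τ => if τ = 0 then 0 else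
        m / (m + a * (Real.sin α * (Real.cos (τ * α) / Real.sin (τ * α)) - Real.cos α)))
      (Set.Icc 0 1) (Set.Icc 0 1) :=
    (gfun_bijOn ha hm hα0 hαπ).congr (fun τ hτ => (hteq τ hτ).symm)
  have hmain : ∀ τ ∈ Set.Icc (0:ℝ) 1,
      (if τ = 0 then 0 else
        m / (m + a * (Real.sin α * (Real.cos (τ * α) / Real.sin (τ * α)) - Real.cos α))) • A +
        (1 - if τ = 0 then 0 else
          m / (m + a * (Real.sin α * (Real.cos (τ * α) / Real.sin (τ * α)) - Real.cos α))) • M ≠ 0 ∧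
      Real.arccos ((frobInner M ((if τ = 0 then 0 else
          m / (m + a * (Real.sin α * (Real.cos (τ * α) / Real.sin (τ * α)) - Real.cos α))) • A +
          (1 - if τ = 0 then 0 else
            m / (m + a * (Real.sin α * (Real.cos (τ * α) / Real.sin (τ * α)) - Real.cos α))) • M)).re /
        (m * frobNorm ((if τ = 0 then 0 else
          m / (m + a * (Real.sin α * (Real.cos (τ * α) / Real.sin (τ * α)) - Real.cos α))) • A +
          (1 - if τ = 0 then 0 else
            m / (m + a * (Real.sin α * (Real.cos (τ * α) / Real.sin (τ * α)) - Real.cos α))) • M)))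
        = τ * α := by
    rintro τ ⟨h0, h1⟩
    rcases eq_or_lt_of_le h0 with h | h
    · rw [← h]
      rw [if_pos rfl]
      simp only [zero_smul, zero_add, sub_zero, one_smul, zero_mul]
      refine ⟨hM, ?_⟩
      rw [← hmm, show m * m = m^2 by ring, div_self (by positivity)]
      exact Real.arccos_one
    · -- τ > 0
      have hs := sin_mul_pos hα0 hαπ h h1
      have hx : (if τ = 0 then 0 else
          m / (m + a * (Real.sin α * (Real.cos (τ*α) / Real.sin (τ*α)) - Real.cos α)))
          = m * Real.sin (τ*α) /
            (m * Real.sin (τ*α) + a * (Real.sin α * Real.cos (τ*α) - Real.cos α * Real.sin (τ*α))) := by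
        rw [hteq τ ⟨h0, h1⟩, gfun, hsub τ]
      set d := m * Real.sin (τ*α)
        + a * (Real.sin α * Real.cos (τ*α) - Real.cos α * Real.sin (τ*α)) with hd_def
      have hdτ : 0 < d := by
        rw [hd_def, ← hsub τ]
        exact gden_pos ha hm hα0 hαπ τ ⟨h0, h1⟩
      rw [hx]
      have hy : 1 - m * Real.sin (τ*α) / d
          = a * (Real.sin α * Real.cos (τ*α) - Real.cos α * Real.sin (τ*α)) / d := by
        field_simp
        linear_combination hd_def
      have hβ : Real.sin (τ*α)^2 + Real.cos (τ*α)^2 = 1 := Real.sin_sq_add_cos_sq (τ*α)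
      have hQQ : (frobInner ((m * Real.sin (τ*α) / d) • A + (1 - m * Real.sin (τ*α) / d) • M)
            ((m * Real.sin (τ*α) / d) • A + (1 - m * Real.sin (τ*α) / d) • M)).re
          = (a*m*Real.sin α/d)^2 := by
        rw [re_smul_add_self, ← haa, ← hmm, ← hc_def, hc, hy]
        exact key_norm a m (Real.sin α) (Real.cos α) (Real.sin (τ*α)) (Real.cos (τ*α)) d
          hdτ.ne' hβ hSC
      have hQnorm : frobNorm ((m * Real.sin (τ*α) / d) • A + (1 - m * Real.sin (τ*α) / d) • M)
          = a*m*Real.sin α/d := by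
        rw [frobNorm_eq_sqrt, hQQ, Real.sqrt_sq (div_pos (mul_pos (mul_pos ha hm) hS) hdτ).le]
      have hQne : (m * Real.sin (τ*α) / d) • A + (1 - m * Real.sin (τ*α) / d) • M ≠ 0 := by
        intro hz
        rw [hz, frobNorm_zero] at hQnorm
        exact (div_pos (mul_pos (mul_pos ha hm) hS) hdτ).ne' hQnorm.symm
      have hMQ : (frobInner M ((m * Real.sin (τ*α) / d) • A + (1 - m * Real.sin (τ*α) / d) • M)).re
          = a*m^2*(Real.sin α * Real.cos (τ*α))/d := by
        rw [re_left_smul_add, ← hmm, ← hc_def, hc, hy]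
        exact key_inner a m (Real.sin α) (Real.cos α) (Real.sin (τ*α)) (Real.cos (τ*α)) d hdτ.ne'
      refine ⟨hQne, ?_⟩
      rw [hMQ, hQnorm, key_ratio a m (Real.sin α) (Real.cos (τ*α)) d hdτ.ne' ha.ne' hm.ne' hS.ne']
      exact Real.arccos_cos (mul_nonneg h0 hα0.le) (le_trans (by nlinarith) hαπ.le)
  exact ⟨hα0, hαπ, hbij, hmain⟩
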